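/- Let M, d₁, d₂ be integers with M ≥ 13, 3 ≤ d₁, d₁ + 2 ≤ d₂ and d₁ + d₂ = M + 2. Define integers m_j for 1 ≤ j ≤ M − 2 by m_j = ⌊(j+3)/2⌋ if j ≤ 2d₁ − 2 and m_j = j − d₁ + 2 if j > 2d₁ − 2. For an integer b with 1 ≤ b ≤ M − 4, set θ_b = (M − 1 − b)·( (∑_{j=1}^{b} m_j) + (d₂ − 2) − b ) + 1. Then θ_b ≥ (M − 2)(M − 1)/2 + 1 for every b with 1 ≤ b ≤ M − 4. -/

import Mathlib

lemma gauss_aux (b : ℤ) (hb : 1 ≤ b) :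
    2 * ∑ j ∈ Finset.Icc (1 : ℤ) b, (j + 2) = b * b + 5 * b := by
  refine Int.le_induction (motive := fun b _ => 2 * ∑ j ∈ Finset.Icc (1 : ℤ) b, (j + 2) = b * b + 5 * b) ?_ ?_ b hb
  · decide
  · intro n hn ih
    have hins : Finset.Icc (1 : ℤ) (n + 1) = insert (n + 1) (Finset.Icc 1 n) := by
      ext x
      simp only [Finset.mem_Icc, Finset.mem_insert]
      omega
    rw [hins, Finset.sum_insert (by simp only [Finset.mem_Icc]; omega)]
    linear_combination ih

lemma cubic_aux (M b : ℤ) (hM : 13 ≤ M) (hb1 : 1 ≤ b) (hb2 : b ≤ M - 4) :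
    4 * ((M - 2) * (M - 1)) ≤ 2 * ((M - 1 - b) * (b * b + b + 2 * M)) := by
  nlinarith [mul_nonneg (mul_nonneg (sub_nonneg.2 hb1) (by linarith : (0:ℤ) ≤ M - 4 - b)) (by linarith : (0:ℤ) ≤ M - 13),
    mul_nonneg (mul_nonneg (sub_nonneg.2 hb1) (by linarith : (0:ℤ) ≤ M - 4 - b)) (by linarith : (0:ℤ) ≤ b),
    mul_nonneg (sub_nonneg.2 hb1) (by linarith : (0:ℤ) ≤ M - 4 - b),
    sq_nonneg (b - 1), sq_nonneg (M - 4 - b)]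

/-- Proposition 3.5: the lower bound θ_b ≥ (M−2)(M−1)/2 + 1 for 1 ≤ b ≤ M − 4,
where θ_b = (M−1−b)((∑_{j=1}^{b} m_j) + (d₂−2) − b) + 1 and m_j is the degree
of the j-th polynomial in the standard order: m_j = ⌊(j+3)/2⌋ for j ≤ 2d₁−2 and
m_j = j − d₁ + 2 for j > 2d₁ − 2. -/
theorem theta_b_estimate (M d₁ d₂ : ℤ) (hM : 13 ≤ M) (hd₁ : 3 ≤ d₁)
    (hd : d₁ + 2 ≤ d₂) (hsum : d₁ + d₂ = M + 2) (b : ℤ) (hb1 : 1 ≤ b)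
    (hb2 : b ≤ M - 4) :
    (M - 2) * (M - 1) / 2 + 1 ≤
      (M - 1 - b) *
          ((∑ j ∈ Finset.Icc (1 : ℤ) b,
              (if j ≤ 2 * d₁ - 2 then (j + 3) / 2 else j - d₁ + 2)) +
            (d₂ - 2) - b) + 1 := by
  set S : ℤ := ∑ j ∈ Finset.Icc (1 : ℤ) b,
      (if j ≤ 2 * d₁ - 2 then (j + 3) / 2 else j - d₁ + 2) with hS
  have hterm : ∑ j ∈ Finset.Icc (1 : ℤ) b, (j + 2) ≤ 2 * S := by
    rw [hS, Finset.mul_sum]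
    apply Finset.sum_le_sum
    intro j hj
    simp only [Finset.mem_Icc] at hj
    split <;> omega
  have hg := gauss_aux b hb1
  have h4S : b * b + 5 * b ≤ 4 * S := by linarith
  -- 4*(S + d₂ - 2 - b) ≥ b*b + b + 2*M since 2*d₂ ≥ M + 4
  have hT : b * b + b + 2 * M ≤ 4 * (S + (d₂ - 2) - b) := by linarith
  have hMb : (0 : ℤ) ≤ M - 1 - b := by linarith
  have hmul : (M - 1 - b) * (b * b + b + 2 * M) ≤
      (M - 1 - b) * (4 * (S + (d₂ - 2) - b)) := mul_le_mul_of_nonneg_left hT hMb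
  have hcub := cubic_aux M b hM hb1 hb2
  have hkey : (M - 2) * (M - 1) ≤ 2 * ((M - 1 - b) * (S + (d₂ - 2) - b)) := by nlinarith
  have hdiv : (M - 2) * (M - 1) / 2 ≤ (M - 1 - b) * (S + (d₂ - 2) - b) := by
    have h2 := Int.ediv_le_ediv (by norm_num : (0:ℤ) < 2) hkey
    rwa [Int.mul_ediv_cancel_left _ (by norm_num)] at h2
  linarith
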